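/- Let f : ℝ → [0,∞) be measurable, vanishing on (−∞,0), with f(τ) < ∞ for all τ, ∫_ℝ f ≤ 1 and ‖f‖_{L²(ℝ)} < ∞, and let κ_d ≥ 0. Then for all τ, t with 0 ≤ τ ≤ t, the series Σ_{j=1}^∞ f^{j*}(τ)·p[j−1; κ_d·(t−τ)] converges (the family of nonnegative terms is summable with finite sum). -/
import Mathlib


open Real MeasureTheory Set

/-- Convolution powers of a function `f : ℝ → ℝ`: `f^{1*} = f` and
`f^{(j+1)*}(τ) = ∫ f^{j*}(x) f(τ−x) dx`.  `convPow f 0` is a junk value. -/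
noncomputable def convPow (f : ℝ → ℝ) : ℕ → ℝ → ℝ
  | 0 => fun _ => 0
  | 1 => f
  | (n + 2) => fun τ => ∫ x, convPow f (n + 1) x * f (τ - x)

/-- `poissonPMFReal'`: the pmf of a Poisson random variable with mean `λ`,
`p[j;λ] = λ^j e^{−λ}/j!`. -/
noncomputable def pois (j : ℕ) (l : ℝ) : ℝ := l ^ j * Real.exp (-l) / j.factorial

theorem convPow_nonneg (f : ℝ → ℝ) (hf : ∀ x, 0 ≤ f x) : ∀ j τ, 0 ≤ convPow f j τ
  | 0, _ => le_refl 0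
  | 1, τ => hf τ
  | (n + 2), τ =>
      integral_nonneg fun x => mul_nonneg (convPow_nonneg f hf (n + 1) x) (hf _)

theorem convPow_le (f : ℝ → ℝ) (hf_nonneg : ∀ x, 0 ≤ f x)
    (hf_int : Integrable f) (hf_mass : ∫ x, f x ≤ 1)
    (hf_sq : Integrable (fun x => f x ^ 2)) :
    ∀ n τ, convPow f (n + 2) τ ≤ ∫ x, f x ^ 2 := by
  intro n
  induction n with
  | zero =>
    intro τ
    have h1 : convPow f 2 τ = ∫ x, f x * f (τ - x) := rfl
    rw [h1]
    have hub : Integrable (fun x => (f x ^ 2 + f (τ - x) ^ 2) / 2) :=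
      (hf_sq.add (hf_sq.comp_sub_left τ)).div_const 2
    have hle : (∫ x, f x * f (τ - x)) ≤ ∫ x, (f x ^ 2 + f (τ - x) ^ 2) / 2 := by
      apply integral_mono_of_nonneg
      · filter_upwards with x using mul_nonneg (hf_nonneg x) (hf_nonneg _)
      · exact hub
      · filter_upwards with x
        nlinarith [sq_nonneg (f x - f (τ - x))]
    refine hle.trans ?_
    rw [integral_div, integral_add hf_sq (hf_sq.comp_sub_left τ),
      integral_sub_left_eq_self (fun x => f x ^ 2) volume τ]
    linarith
  | succ n ih =>
    intro τ
    have h1 : convPow f (n + 3) τ = ∫ x, convPow f (n + 2) x * f (τ - x) := rfl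
    rw [h1]
    set C := ∫ x, f x ^ 2 with hC
    have hC0 : 0 ≤ C := integral_nonneg fun x => sq_nonneg _
    have hub : Integrable (fun x => C * f (τ - x)) :=
      (hf_int.comp_sub_left τ).const_mul C
    have hle : (∫ x, convPow f (n + 2) x * f (τ - x)) ≤ ∫ x, C * f (τ - x) := by
      apply integral_mono_of_nonneg
      · filter_upwards with x using
          mul_nonneg (convPow_nonneg f hf_nonneg (n + 2) x) (hf_nonneg _)
      · exact hub
      · filter_upwards with x using
          mul_le_mul_of_nonneg_right (ih x) (hf_nonneg _)
    refine hle.trans ?_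
    rw [integral_const_mul, integral_sub_left_eq_self f volume τ]
    calc C * ∫ x, f x ≤ C * 1 := mul_le_mul_of_nonneg_left hf_mass hC0
    _ = C := mul_one C

/-- the series `Σ_{j=1}^∞ f^{j*}(τ) p[j−1; κ_d(t−τ)]` defining the density
`φ(τ,t)` of the total free-motion time converges for all `0 ≤ τ ≤ t`. -/
theorem series_summable (f : ℝ → ℝ) (hf_meas : Measurable f)
    (hf_nonneg : ∀ x, 0 ≤ f x) (hf_zero : ∀ x < (0 : ℝ), f x = 0)
    (hf_int : Integrable f) (hf_mass : ∫ x, f x ≤ 1)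
    (hf_sq : Integrable (fun x => f x ^ 2))
    (κd : ℝ) (hκd : 0 ≤ κd)
    (τ t : ℝ) (hτ : 0 ≤ τ) (hτt : τ ≤ t) :
    Summable (fun j : ℕ => convPow f (j + 1) τ * pois j (κd * (t - τ))) := by
  set l := κd * (t - τ) with hl
  have hl0 : 0 ≤ l := mul_nonneg hκd (by linarith)
  set C := ∫ x, f x ^ 2 with hC
  have hC0 : 0 ≤ C := integral_nonneg fun x => sq_nonneg _
  rw [← summable_nat_add_iff 1]
  have hbig : Summable (fun j : ℕ => C * (l ^ (j + 1) / (j + 1).factorial)) :=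
    (summable_nat_add_iff 1).2 ((Real.summable_pow_div_factorial l).mul_left C)
  apply Summable.of_nonneg_of_le ?_ ?_ hbig
  · intro j
    exact mul_nonneg (convPow_nonneg f hf_nonneg _ _) <| by
      unfold pois
      positivity
  · intro j
    have h1 : convPow f (j + 1 + 1) τ ≤ C := convPow_le f hf_nonneg hf_int hf_mass hf_sq j τ
    have h2 : pois (j + 1) l ≤ l ^ (j + 1) / (j + 1).factorial := by
      unfold pois
      rw [div_le_div_iff_of_pos_right (by positivity)]
      calc l ^ (j + 1) * Real.exp (-l) ≤ l ^ (j + 1) * 1 := by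
            exact mul_le_mul_of_nonneg_left
              (Real.exp_le_one_iff.2 (by linarith)) (by positivity)
      _ = l ^ (j + 1) := mul_one _
    calc convPow f (j + 1 + 1) τ * pois (j + 1) l
        ≤ C * (l ^ (j + 1) / (j + 1).factorial) := by
          apply mul_le_mul h1 h2 ?_ hC0
          unfold pois; positivity
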